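/- Let A be an n×n row-stochastic real matrix whose first row is (1, 0, …, 0), with aᵢᵢ > 0 for all i, and let Ã denote the (n−1)×(n−1) lower-right submatrix; assume Ã is substochastic and irreducible with at least one row of Ã summing to strictly less than 1. Let k ≥ 1, σ̄ ∈ ℝ^k, and X_t = (A ⊗ I_k) X_{t−1} with X₁ ∈ ℝ^{kn} whose first k-dimensional block equals σ̄. Then consensus to 𝟏ₙ ⊗ σ̄ is reached exponentially: for every r with ρ(Ã) < r < 1 there exists a constant C > 0 such that ‖X_t − (𝟏ₙ ⊗ σ̄)‖_∞ ≤ C · r^{t−1} · ‖X₁ − (𝟏ₙ ⊗ σ̄)‖_∞ for all t ≥ 1, where ρ(Ã) < 1 is the spectral radius of Ã. -/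

import Mathlib

open Kronecker

/-- The vector infinity norm: maximum absolute value of the entries. -/
noncomputable def vecInfNorm {ι : Type*} [Fintype ι] (v : ι → ℝ) : ℝ :=
  ⨆ i, |v i|

/-- The spectral radius of a real square matrix: the maximum of the absolute
values of its complex eigenvalues (as a real number). -/
noncomputable def matSpectralRadius {n : ℕ} (M : Matrix (Fin n) (Fin n) ℝ) : ℝ :=
  (spectralRadius ℂ (M.map (Complex.ofReal ·))).toReal

open Matrix Filter
open scoped ENNReal NNReal

attribute [local instance] Matrix.linftyOpNormedRing Matrix.linftyOpNormedAlgebra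

section AuxRowSum
variable {n : ℕ} (B : Matrix (Fin n) (Fin n) ℝ)

lemma aux_pow_nonneg (hB : ∀ i j, 0 ≤ B i j) (t : ℕ) : ∀ i j, 0 ≤ (B ^ t) i j := by
  induction t with
  | zero => intro i j; simp [Matrix.one_apply]; split <;> norm_num
  | succ t ih =>
    intro i j
    rw [pow_succ, Matrix.mul_apply]
    exact Finset.sum_nonneg fun p _ => mul_nonneg (ih i p) (hB p j)

lemma aux_rowsum_succ (t : ℕ) (i : Fin n) :
    ∑ j, (B ^ (t + 1)) i j = ∑ p, (B ^ t) i p * ∑ j, B p j := by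
  simp_rw [pow_succ, Matrix.mul_apply, Finset.mul_sum]
  exact Finset.sum_comm

lemma aux_rowsum_succ' (t : ℕ) (i : Fin n) :
    ∑ j, (B ^ (t + 1)) i j = ∑ p, B i p * ∑ j, (B ^ t) p j := by
  simp_rw [pow_succ', Matrix.mul_apply, Finset.mul_sum]
  exact Finset.sum_comm

lemma aux_rowsum_le_one (hB : ∀ i j, 0 ≤ B i j) (hrow : ∀ i, ∑ j, B i j ≤ 1) (t : ℕ) (i : Fin n) :
    ∑ j, (B ^ t) i j ≤ 1 := by
  induction t generalizing i with
  | zero => simp [Matrix.one_apply]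
  | succ t ih =>
    rw [aux_rowsum_succ' B t i]
    calc ∑ p, B i p * ∑ j, (B ^ t) p j ≤ ∑ p, B i p * 1 :=
          Finset.sum_le_sum fun p _ => mul_le_mul_of_nonneg_left (ih p) (hB i p)
      _ ≤ 1 := by simpa using hrow i

lemma aux_rowsum_antitone (hB : ∀ i j, 0 ≤ B i j) (hrow : ∀ i, ∑ j, B i j ≤ 1) :
    ∀ t i, ∑ j, (B ^ (t + 1)) i j ≤ ∑ j, (B ^ t) i j := by
  intro t
  induction t with
  | zero => intro i; simpa [Matrix.one_apply] using hrow i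
  | succ t ih =>
    intro i
    rw [aux_rowsum_succ' B (t + 1) i, aux_rowsum_succ' B t i]
    exact Finset.sum_le_sum fun p _ => mul_le_mul_of_nonneg_left (ih p) (hB i p)

lemma aux_rowsum_mono (hB : ∀ i j, 0 ≤ B i j) (hrow : ∀ i, ∑ j, B i j ≤ 1)
    {s t : ℕ} (hst : s ≤ t) (i : Fin n) : ∑ j, (B ^ t) i j ≤ ∑ j, (B ^ s) i j := by
  induction t with
  | zero => simp [Nat.le_zero.mp hst]
  | succ t ih =>
    rcases Nat.lt_or_ge s (t + 1) with h | h
    · exact (aux_rowsum_antitone B hB hrow t i).trans (ih (Nat.lt_succ_iff.mp h))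
    · have : s = t + 1 := le_antisymm hst h
      simp [this]

lemma aux_exists_pow_rowsum_lt (hB : ∀ i j, 0 ≤ B i j) (hrow : ∀ i, ∑ j, B i j ≤ 1)
    (hstrict : ∃ i₀, ∑ j, B i₀ j < 1)
    (hirr : ∀ i j, ∃ t : ℕ, 0 < t ∧ 0 < (B ^ t) i j) :
    ∃ m : ℕ, 1 ≤ m ∧ ∀ i, ∑ j, (B ^ m) i j < 1 := by
  obtain ⟨i₀, hi₀⟩ := hstrict
  have key : ∀ i, ∃ m : ℕ, 1 ≤ m ∧ ∑ j, (B ^ m) i j < 1 := by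
    intro i
    obtain ⟨t, ht, hpos⟩ := hirr i i₀
    refine ⟨t + 1, le_add_self, ?_⟩
    rw [aux_rowsum_succ B t i]
    calc ∑ p, (B ^ t) i p * ∑ j, B p j < ∑ p, (B ^ t) i p := by
          refine Finset.sum_lt_sum (fun p _ => ?_) ⟨i₀, Finset.mem_univ _, ?_⟩
          · calc (B ^ t) i p * ∑ j, B p j ≤ (B ^ t) i p * 1 :=
                mul_le_mul_of_nonneg_left (hrow p) (aux_pow_nonneg B hB t i p)
              _ = (B ^ t) i p := mul_one _
          · calc (B ^ t) i i₀ * ∑ j, B i₀ j < (B ^ t) i i₀ * 1 :=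
                mul_lt_mul_of_pos_left hi₀ hpos
              _ = (B ^ t) i i₀ := mul_one _
      _ ≤ 1 := aux_rowsum_le_one B hB hrow t i
  choose f hf1 hf2 using key
  refine ⟨Finset.univ.sup f ⊔ 1, le_max_right _ _, fun i => ?_⟩
  exact lt_of_le_of_lt
    (aux_rowsum_mono B hB hrow (le_sup_of_le_left (Finset.le_sup (Finset.mem_univ i))) i) (hf2 i)

end AuxRowSum

section AuxSpectral

lemma aux_map_pow {n : ℕ} (M : Matrix (Fin n) (Fin n) ℝ) (t : ℕ) :
    (M.map (Complex.ofReal ·)) ^ t = (M ^ t).map (Complex.ofReal ·) := by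
  have := map_pow ((Complex.ofRealHom : ℝ →+* ℂ).mapMatrix : Matrix (Fin n) (Fin n) ℝ →+* _) M t
  exact this.symm

lemma aux_nnnorm_map {n : ℕ} (M : Matrix (Fin n) (Fin n) ℝ) :
    ‖M.map (Complex.ofReal ·)‖₊ = ‖M‖₊ := by
  rw [Matrix.linfty_opNNNorm_def, Matrix.linfty_opNNNorm_def]
  congr 1; ext i; congr 1; ext j; simp [Matrix.map_apply]

lemma aux_norm_map {n : ℕ} (M : Matrix (Fin n) (Fin n) ℝ) :
    ‖M.map (Complex.ofReal ·)‖ = ‖M‖ := congrArg NNReal.toReal (aux_nnnorm_map M)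

lemma aux_nnnorm_lt_one {n : ℕ} (B : Matrix (Fin n) (Fin n) ℝ)
    (hnn : ∀ i j, 0 ≤ B i j) (hlt : ∀ i, ∑ j, B i j < 1) : ‖B‖₊ < 1 := by
  rw [Matrix.linfty_opNNNorm_def]
  refine Finset.sup_lt_iff (by norm_num) |>.mpr fun i _ => ?_
  rw [← NNReal.coe_lt_coe]
  push_cast
  calc (∑ j, ‖B i j‖) = ∑ j, B i j := by
        refine Finset.sum_congr rfl fun j _ => ?_
        rw [Real.norm_eq_abs, abs_of_nonneg (hnn i j)]
    _ < 1 := hlt i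

lemma aux_spectralRadius_lt_one {n : ℕ} (B : Matrix (Fin n) (Fin n) ℝ) [Nonempty (Fin n)]
    (m : ℕ) (hm : 1 ≤ m) (hlt : ‖B ^ m‖₊ < 1) :
    spectralRadius ℂ (B.map (Complex.ofReal ·)) < 1 := by
  obtain ⟨m', rfl⟩ : ∃ m', m = m' + 1 := ⟨m - 1, by omega⟩
  set a := B.map (Complex.ofReal ·) with ha
  have hb := spectrum.spectralRadius_le_pow_nnnorm_pow_one_div ℂ a m'
  have hnorm : ‖a ^ (m' + 1)‖₊ = ‖B ^ (m' + 1)‖₊ := by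
    rw [aux_map_pow, aux_nnnorm_map]
  rw [hnorm, nnnorm_one, ENNReal.coe_one, ENNReal.one_rpow, mul_one] at hb
  refine hb.trans_lt (ENNReal.rpow_lt_one (ENNReal.coe_lt_one_iff.mpr hlt) ?_)
  positivity

lemma aux_norm_pow_le {n : ℕ} (B : Matrix (Fin n) (Fin n) ℝ)
    (h1 : spectralRadius ℂ (B.map (Complex.ofReal ·)) < 1)
    {r : ℝ} (hr : matSpectralRadius B < r) :
    ∃ N : ℕ, ∀ t, N ≤ t → ‖B ^ t‖ ≤ r ^ t := by
  set a := B.map (Complex.ofReal ·) with ha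
  have hrpos : 0 < r := lt_of_le_of_lt ENNReal.toReal_nonneg hr
  have hne : spectralRadius ℂ a ≠ ⊤ := (h1.trans ENNReal.one_lt_top).ne
  have hlt' : spectralRadius ℂ a < ENNReal.ofReal r :=
    (ENNReal.lt_ofReal_iff_toReal_lt hne).mpr hr
  have hev := (spectrum.pow_nnnorm_pow_one_div_tendsto_nhds_spectralRadius a).eventually_lt_const
    hlt'
  obtain ⟨N, hN⟩ := eventually_atTop.mp hev
  refine ⟨max N 1, fun t ht => ?_⟩
  have ht1 : (t : ℝ) ≠ 0 := by
    have : 1 ≤ t := le_trans (le_max_right _ _) ht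
    positivity
  have h2 : (‖a ^ t‖₊ : ℝ≥0∞) ≤ (ENNReal.ofReal r) ^ (t : ℝ) := by
    have h3 := ENNReal.rpow_le_rpow (hN t (le_trans (le_max_left _ _) ht)).le
      (Nat.cast_nonneg t)
    rwa [← ENNReal.rpow_mul, one_div, inv_mul_cancel₀ ht1, ENNReal.rpow_one] at h3
  have h4 := ENNReal.toReal_mono
    (ENNReal.rpow_ne_top_of_nonneg (Nat.cast_nonneg t) ENNReal.ofReal_ne_top) h2
  rw [ENNReal.coe_toReal, coe_nnnorm, ← ENNReal.toReal_rpow, ENNReal.toReal_ofReal hrpos.le,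
    Real.rpow_natCast] at h4
  rwa [ha, aux_map_pow, aux_norm_map] at h4

end AuxSpectral

section AuxVecInfNorm
variable {ι : Type*} [Fintype ι]

lemma aux_abs_le_vecInfNorm (v : ι → ℝ) (i : ι) : |v i| ≤ vecInfNorm v :=
  le_ciSup (f := fun i => |v i|) (Set.Finite.bddAbove (Set.finite_range _)) i

lemma aux_vecInfNorm_nonneg [Nonempty ι] (v : ι → ℝ) : 0 ≤ vecInfNorm v :=
  (abs_nonneg _).trans (aux_abs_le_vecInfNorm v (Classical.arbitrary ι))

lemma aux_vecInfNorm_le [Nonempty ι] {v : ι → ℝ} {c : ℝ} (h : ∀ i, |v i| ≤ c) :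
    vecInfNorm v ≤ c := ciSup_le h

end AuxVecInfNorm

/-- **Corollary 4: exponential consensus with an unknown leader, vectored
dynamics.** Under the hypotheses of Theorem 4, `ρ(Ã) < 1` and for every rate
`r` with `ρ(Ã) < r < 1` there is `C > 0` such that
`‖X_t − 𝟏ₙ ⊗ σ̄‖_∞ ≤ C · r^{t−1} · ‖X₁ − 𝟏ₙ ⊗ σ̄‖_∞`
(indices shifted so that the initial condition is `X 0`). -/
theorem exponential_consensus_with_leader_vectored
    {n k : ℕ} (hk : 1 ≤ k)
    (A : Matrix (Fin (n + 1)) (Fin (n + 1)) ℝ)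
    (hA_nonneg : ∀ i j, 0 ≤ A i j)
    (hA_row : ∀ i, ∑ j, A i j = 1)
    (hA_diag : ∀ i, 0 < A i i)
    (hA_leader₁ : A 0 0 = 1) (hA_leader₂ : ∀ j, j ≠ 0 → A 0 j = 0)
    (Atil : Matrix (Fin n) (Fin n) ℝ)
    (hAtil : ∀ i j, Atil i j = A i.succ j.succ)
    (hsub_nonneg : ∀ i j, 0 ≤ Atil i j)
    (hsub_row : ∀ i, ∑ j, Atil i j ≤ 1)
    (hsub_strict : ∃ i, ∑ j, Atil i j < 1)
    (hirr : ∀ i j, ∃ t : ℕ, 0 < t ∧ 0 < (Atil ^ t) i j)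
    (σ : Fin k → ℝ) (X : ℕ → Fin (n + 1) × Fin k → ℝ)
    (hX : ∀ t, X (t + 1) =
      (A ⊗ₖ (1 : Matrix (Fin k) (Fin k) ℝ)).mulVec (X t))
    (hX₀ : ∀ j, X 0 (0, j) = σ j) :
    matSpectralRadius Atil < 1 ∧
      ∀ r : ℝ, matSpectralRadius Atil < r → r < 1 →
        ∃ C : ℝ, 0 < C ∧
          ∀ t : ℕ, vecInfNorm (X t - (fun p => σ p.2)) ≤
            C * r ^ t * vecInfNorm (X 0 - (fun p => σ p.2)) := by
  obtain ⟨i₀w, hi₀w⟩ := hsub_strict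
  have hFn : Nonempty (Fin n) := ⟨i₀w⟩
  have hFk : Nonempty (Fin k) := ⟨⟨0, hk⟩⟩
  -- spectral radius < 1
  obtain ⟨m, hm1, hmlt⟩ := aux_exists_pow_rowsum_lt Atil hsub_nonneg hsub_row ⟨i₀w, hi₀w⟩ hirr
  have hpowlt : ‖Atil ^ m‖₊ < 1 :=
    aux_nnnorm_lt_one _ (aux_pow_nonneg Atil hsub_nonneg m) hmlt
  have hρ1 : spectralRadius ℂ (Atil.map (Complex.ofReal ·)) < 1 :=
    aux_spectralRadius_lt_one Atil m hm1 hpowlt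
  have hρ1' : matSpectralRadius Atil < 1 := by
    have hne : spectralRadius ℂ (Atil.map (Complex.ofReal ·)) ≠ ⊤ :=
      (hρ1.trans ENNReal.one_lt_top).ne
    have := (ENNReal.toReal_lt_toReal hne ENNReal.one_ne_top).mpr hρ1
    simpa [matSpectralRadius] using this
  -- basic dynamics facts
  have hstep : ∀ t (i : Fin (n + 1)) (j : Fin k),
      X (t + 1) (i, j) = ∑ p, A i p * X t (p, j) := by
    intro t i j
    rw [hX t]
    simp only [Matrix.mulVec, dotProduct, Fintype.sum_prod_type,
      Matrix.kroneckerMap_apply, Matrix.one_apply, mul_ite, ite_mul, mul_one, mul_zero,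
      zero_mul, one_mul]
    refine Finset.sum_congr rfl fun p _ => ?_
    rw [Finset.sum_ite_eq (Finset.univ : Finset (Fin k)) j (fun q => A i p * X t (p, q))]
    simp
  have h0 : ∀ t j, X t (0, j) = σ j := by
    intro t
    induction t with
    | zero => exact hX₀
    | succ t ih =>
      intro j
      rw [hstep t 0 j]
      rw [Finset.sum_eq_single (0 : Fin (n + 1))]
      · rw [hA_leader₁, one_mul, ih j]
      · intro p _ hp
        rw [hA_leader₂ p hp, zero_mul]
      · intro h; exact absurd (Finset.mem_univ _) h
  set w0 : Fin k → Fin n → ℝ := fun j i => X 0 (i.succ, j) - σ j with hw0def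
  have hw : ∀ t (i : Fin n) (j : Fin k),
      X t (i.succ, j) - σ j = ((Atil ^ t) *ᵥ (w0 j)) i := by
    intro t
    induction t with
    | zero => intro i j; simp [w0]
    | succ t ih =>
      intro i j
      have hσ : σ j = ∑ p, A i.succ p * σ j := by
        rw [← Finset.sum_mul, hA_row, one_mul]
      rw [hstep t i.succ j]
      nth_rewrite 1 [hσ]
      rw [← Finset.sum_sub_distrib]
      simp_rw [← mul_sub]
      rw [Fin.sum_univ_succ]
      rw [h0 t j, sub_self, mul_zero, zero_add]
      have : ∑ p : Fin n, A i.succ p.succ * (X t (p.succ, j) - σ j)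
          = ∑ p : Fin n, Atil i p * ((Atil ^ t) *ᵥ (w0 j)) p := by
        refine Finset.sum_congr rfl fun p _ => ?_
        rw [ih p j, hAtil i p]
      rw [this]
      have : ∑ p : Fin n, Atil i p * ((Atil ^ t) *ᵥ (w0 j)) p
          = (Atil *ᵥ ((Atil ^ t) *ᵥ (w0 j))) i := rfl
      rw [this, Matrix.mulVec_mulVec, ← pow_succ']
  -- the rate part
  refine ⟨hρ1', fun r hr hr1 => ?_⟩
  have hrpos : 0 < r := lt_of_le_of_lt ENNReal.toReal_nonneg hr
  obtain ⟨N, hN⟩ := aux_norm_pow_le Atil hρ1 hr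
  set C : ℝ := 1 + ∑ t ∈ Finset.range N, ‖Atil ^ t‖ / r ^ t with hCdef
  have hsum_nonneg : (0:ℝ) ≤ ∑ t ∈ Finset.range N, ‖Atil ^ t‖ / r ^ t :=
    Finset.sum_nonneg fun t _ => div_nonneg (norm_nonneg _) (pow_nonneg hrpos.le t)
  have hC1 : 1 ≤ C := le_add_of_nonneg_right hsum_nonneg
  have hC : 0 < C := lt_of_lt_of_le one_pos hC1
  have hCnorm : ∀ t, ‖Atil ^ t‖ ≤ C * r ^ t := by
    intro t
    rcases le_or_gt N t with h | h
    · calc ‖Atil ^ t‖ ≤ r ^ t := hN t h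
        _ = 1 * r ^ t := (one_mul _).symm
        _ ≤ C * r ^ t := mul_le_mul_of_nonneg_right hC1 (pow_nonneg hrpos.le t)
    · have h1 : ‖Atil ^ t‖ = (‖Atil ^ t‖ / r ^ t) * r ^ t :=
        (div_mul_cancel₀ _ (pow_ne_zero t hrpos.ne')).symm
      rw [h1]
      refine mul_le_mul_of_nonneg_right ?_ (pow_nonneg hrpos.le t)
      calc ‖Atil ^ t‖ / r ^ t
          ≤ ∑ s ∈ Finset.range N, ‖Atil ^ s‖ / r ^ s :=
            Finset.single_le_sum (fun s _ => div_nonneg (norm_nonneg _) (pow_nonneg hrpos.le s))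
              (Finset.mem_range.mpr h)
        _ ≤ C := le_add_of_nonneg_left one_pos.le
  refine ⟨C, hC, fun t => ?_⟩
  set φ : Fin (n + 1) × Fin k → ℝ := fun p => σ p.2 with hφ
  have hE0 : 0 ≤ vecInfNorm (X 0 - φ) := aux_vecInfNorm_nonneg _
  have hw0_bound : ∀ j, ‖w0 j‖ ≤ vecInfNorm (X 0 - φ) := by
    intro j
    refine (pi_norm_le_iff_of_nonneg hE0).mpr fun i => ?_
    rw [Real.norm_eq_abs]
    have : w0 j i = (X 0 - φ) (i.succ, j) := by simp [w0, φ]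
    rw [this]
    exact aux_abs_le_vecInfNorm _ _
  have hrhs0 : 0 ≤ C * r ^ t := mul_nonneg hC.le (pow_nonneg hrpos.le t)
  refine aux_vecInfNorm_le fun p => ?_
  obtain ⟨i, j⟩ := p
  induction i using Fin.cases with
  | zero =>
    have : (X t - φ) (0, j) = 0 := by simp [φ, Pi.sub_apply, h0 t j]
    rw [this, abs_zero]
    exact mul_nonneg hrhs0 hE0
  | succ i =>
    have h1 : (X t - φ) (i.succ, j) = ((Atil ^ t) *ᵥ (w0 j)) i := by
      simpa using hw t i j
    rw [h1]
    calc |((Atil ^ t) *ᵥ (w0 j)) i| ≤ ‖(Atil ^ t) *ᵥ (w0 j)‖ := by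
          rw [← Real.norm_eq_abs]; exact norm_le_pi_norm _ i
      _ ≤ ‖Atil ^ t‖ * ‖w0 j‖ := Matrix.linfty_opNorm_mulVec _ _
      _ ≤ (C * r ^ t) * vecInfNorm (X 0 - φ) :=
          mul_le_mul (hCnorm t) (hw0_bound j) (norm_nonneg _) hrhs0
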